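/- Let f : ℝ^d → ℝ be β-smooth and differentiable, let x, u ∈ ℝ^d with ‖u‖ = 1 and γ > 0. If βγ < |⟪u, ∇f(x)⟫|, then sign(f(x + γu) - f(x - γu)) = sign(⟪u, ∇f(x)⟫), where sign(t) = 1 if t ≥ 0 and -1 otherwise. -/
import Mathlib


open scoped RealInnerProductSpace

/-- The sign function: `1` if `t ≥ 0`, `-1` otherwise. -/
noncomputable def sgn (t : ℝ) : ℝ := if 0 ≤ t then 1 else -1

/-- For `β`-smooth `f`, a unit vector `u`, `γ > 0` with `βγ < |⟪u, ∇f(x)⟫|`, the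
sign of the symmetric difference `f(x+γu) - f(x-γu)` equals the sign of `⟪u, ∇f(x)⟫`. -/
theorem smooth_sign_recovery
    (d : ℕ) (β γ : ℝ) (hβ : 0 < β) (hγ : 0 < γ)
    (f : EuclideanSpace ℝ (Fin d) → ℝ) (g : EuclideanSpace ℝ (Fin d) → EuclideanSpace ℝ (Fin d))
    (hsmooth : ∀ x y, |f y - f x - ⟪g x, y - x⟫| ≤ (β / 2) * ‖y - x‖ ^ 2)
    (x u : EuclideanSpace ℝ (Fin d)) (hu : ‖u‖ = 1)
    (hgap : β * γ < |⟪u, g x⟫|) :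
    sgn (f (x + γ • u) - f (x - γ • u)) = sgn ⟪u, g x⟫ := by
  set s : ℝ := ⟪u, g x⟫ with hs
  have hcomm : ⟪g x, u⟫ = s := real_inner_comm _ _
  have h1 : |f (x + γ • u) - f x - γ * s| ≤ (β / 2) * γ ^ 2 := by
    have := hsmooth x (x + γ • u)
    have e : (x + γ • u) - x = γ • u := by abel
    rw [e, real_inner_smul_right, hcomm, norm_smul, hu, Real.norm_eq_abs,
      abs_of_pos hγ, mul_one] at this
    exact this
  have h2 : |f (x - γ • u) - f x + γ * s| ≤ (β / 2) * γ ^ 2 := by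
    have := hsmooth x (x - γ • u)
    have e : (x - γ • u) - x = (-γ) • u := by rw [neg_smul]; abel
    rw [e, real_inner_smul_right, hcomm, norm_smul, hu, Real.norm_eq_abs,
      abs_neg, abs_of_pos hγ, mul_one] at this
    simpa [sub_eq_add_neg, neg_mul] using this
  have key : |f (x + γ • u) - f (x - γ • u) - 2 * γ * s| ≤ β * γ ^ 2 := by
    have := abs_sub (f (x + γ • u) - f x - γ * s) (f (x - γ • u) - f x + γ * s)
    calc |f (x + γ • u) - f (x - γ • u) - 2 * γ * s|
        = |(f (x + γ • u) - f x - γ * s) - (f (x - γ • u) - f x + γ * s)| := by ring_nf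
      _ ≤ |f (x + γ • u) - f x - γ * s| + |f (x - γ • u) - f x + γ * s| := abs_sub _ _
      _ ≤ (β / 2) * γ ^ 2 + (β / 2) * γ ^ 2 := add_le_add h1 h2
      _ = β * γ ^ 2 := by ring
  have hlt : β * γ ^ 2 < 2 * γ * |s| := by
    have : β * γ * γ < |s| * γ := by exact mul_lt_mul_of_pos_right hgap hγ
    nlinarith [abs_nonneg s]
  have hs0 : s ≠ 0 := by
    intro h; rw [h] at hgap; simp at hgap; nlinarith
  rcases lt_or_gt_of_ne hs0 with hneg | hpos
  · have : f (x + γ • u) - f (x - γ • u) < 0 := by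
      have := abs_le.mp key
      have habs : |s| = -s := abs_of_neg hneg
      nlinarith [this.2]
    simp [sgn, not_le.mpr this, not_le.mpr hneg]
  · have : 0 ≤ f (x + γ • u) - f (x - γ • u) := by
      have := abs_le.mp key
      have habs : |s| = s := abs_of_pos hpos
      nlinarith [this.1]
    simp [sgn, this, hpos.le]
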